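/- For every integer m ≥ 2, the set Shed(P_m) is not a dominating set of the graph P_m. -/

import Mathlib

open scoped Classical

variable {V : Type*}

/-- `S` is an independent set of the induced subgraph of `G` on the vertex set `A`. -/
def IsIndepIn (G : SimpleGraph V) (A S : Finset V) : Prop :=
  S ⊆ A ∧ ∀ u ∈ S, ∀ v ∈ S, ¬ G.Adj u v

/-- `S` is a maximal independent set of the induced subgraph of `G` on the vertex set `A`. -/
def IsMaxIndepIn (G : SimpleGraph V) (A S : Finset V) : Prop :=
  IsIndepIn G A S ∧ ∀ T, IsIndepIn G A T → S ⊆ T → T = S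

/-- The induced subgraph of `G` on the vertex set `A` is well-covered: all of its
maximal independent sets have the same cardinality. -/
def WellCoveredOn (G : SimpleGraph V) (A : Finset V) : Prop :=
  ∀ S T, IsMaxIndepIn G A S → IsMaxIndepIn G A T → S.card = T.card

/-- The closed neighbourhood of `x` deleted from `A`: the vertices of `A` distinct from `x`
and not adjacent to `x`. -/
noncomputable def delClosedNbhd (G : SimpleGraph V) (A : Finset V) (x : V) : Finset V :=
  A.filter fun y => y ≠ x ∧ ¬ G.Adj x y

/-- The induced subgraph of `G` on the vertex set `A` is vertex decomposable: it is
well-covered, and either it has no edges, or some vertex `x ∈ A` is such that deleting `x`,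
respectively the closed neighbourhood of `x`, leaves a vertex decomposable graph. -/
def VertexDecomposableOn (G : SimpleGraph V) (A : Finset V) : Prop :=
  WellCoveredOn G A ∧
    ((∀ u ∈ A, ∀ v ∈ A, ¬ G.Adj u v) ∨
      ∃ x, ∃ _h : x ∈ A,
        VertexDecomposableOn G (A.erase x) ∧
        VertexDecomposableOn G (delClosedNbhd G A x))
termination_by A.card
decreasing_by
  · exact Finset.card_erase_lt_of_mem (by assumption)
  · exact Finset.card_lt_card
      (Finset.filter_ssubset.mpr ⟨x, by assumption, by simp⟩)

/-- A finite simple graph is well-covered if all of its maximal independent sets have the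
same cardinality. -/
def WellCovered (G : SimpleGraph V) [Fintype V] : Prop :=
  WellCoveredOn G Finset.univ

/-- A finite simple graph is vertex decomposable. -/
def VertexDecomposable (G : SimpleGraph V) [Fintype V] : Prop :=
  VertexDecomposableOn G Finset.univ

/-- The set of shedding vertices of `G` : those vertices `x` such that both `G \ x` and
`G \ N[x]` are vertex decomposable. -/
def Shed (G : SimpleGraph V) [Fintype V] : Set V :=
  {x | VertexDecomposableOn G (Finset.univ.erase x) ∧
       VertexDecomposableOn G (delClosedNbhd G Finset.univ x)}

/-- `D` is a dominating set of `G`: every vertex not in `D` is adjacent to a vertex of `D`. -/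
def IsDominatingSet (G : SimpleGraph V) (D : Set V) : Prop :=
  ∀ v, v ∉ D → ∃ u ∈ D, G.Adj u v

/-- A vertex is simplicial if its neighbourhood induces a clique. -/
def IsSimplicialVertex (G : SimpleGraph V) (x : V) : Prop :=
  ∀ u v, G.Adj x u → G.Adj x v → u ≠ v → G.Adj u v

/-- The graph `P_m` on the vertex set `X ⊕ Y ⊕ Z` with `X = Fin (2*m)`, `Y = Fin 2`,
`Z = Fin 3` (all 0-indexed, so the paper's `x_j`, `y_j`, `z_j` are indices `j - 1`).
Its edges are exactly: `X` induces the complete `m`-partite graph `K_{2,…,2}` whose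
complement is the matching pairing `x_{2i}` with `x_{2i+1}`; `y_0` is adjacent to `z_0`
and to every even-indexed vertex of `X`; `y_1` is adjacent to `z_1` and to every
odd-indexed vertex of `X`; and `Z` induces a complete graph `K_3`. -/
def Pgraph (m : ℕ) : SimpleGraph (Fin (2 * m) ⊕ Fin 2 ⊕ Fin 3) :=
  SimpleGraph.fromRel fun p q =>
    match p, q with
    | Sum.inl a, Sum.inl b => a.val / 2 ≠ b.val / 2
    | Sum.inr (Sum.inl y), Sum.inl a => a.val % 2 = y.val
    | Sum.inr (Sum.inl y), Sum.inr (Sum.inr z) => y.val = z.val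
    | Sum.inr (Sum.inr z), Sum.inr (Sum.inr w) => z ≠ w
    | _, _ => False

section Generic
variable {V : Type*}

lemma isMaxIndepIn_iff {G : SimpleGraph V} {A S : Finset V} :
    IsMaxIndepIn G A S ↔
      S ⊆ A ∧ (∀ u ∈ S, ∀ v ∈ S, ¬ G.Adj u v) ∧
        ∀ v ∈ A, v ∉ S → ∃ u ∈ S, G.Adj u v := by
  constructor
  · rintro ⟨⟨hS, hind⟩, hmax⟩
    refine ⟨hS, hind, ?_⟩
    intro v hvA hvS
    by_contra h
    push_neg at h
    have hins : IsIndepIn G A (insert v S) := by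
      refine ⟨Finset.insert_subset hvA hS, ?_⟩
      intro u hu w hw hadj
      rcases Finset.mem_insert.mp hu with hu' | hu' <;>
        rcases Finset.mem_insert.mp hw with hw' | hw'
      · exact G.irrefl (hu' ▸ hw' ▸ hadj)
      · exact h w hw' (hu' ▸ hadj).symm
      · exact h u hu' (hw' ▸ hadj)
      · exact hind u hu' w hw' hadj
    have := hmax _ hins (Finset.subset_insert _ _)
    exact hvS (this ▸ Finset.mem_insert_self v S)
  · rintro ⟨hS, hind, hdom⟩
    refine ⟨⟨hS, hind⟩, ?_⟩
    rintro T ⟨hTA, hTind⟩ hST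
    refine Finset.Subset.antisymm ?_ hST
    intro w hwT
    by_contra hwS
    obtain ⟨u, huS, hadj⟩ := hdom w (hTA hwT) hwS
    exact hTind u (hST huS) w hwT hadj

lemma notWC_of {G : SimpleGraph V} {A S T : Finset V}
    (hS : IsMaxIndepIn G A S) (hT : IsMaxIndepIn G A T) (h : S.card ≠ T.card) :
    ¬ WellCoveredOn G A :=
  fun hwc => h (hwc S T hS hT)

lemma notVD_of_notWC {G : SimpleGraph V} {A : Finset V}
    (h : ¬ WellCoveredOn G A) : ¬ VertexDecomposableOn G A := by
  intro hvd
  rw [VertexDecomposableOn] at hvd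
  exact h hvd.1

lemma notVD_step {G : SimpleGraph V} {A : Finset V}
    (hedge : ∃ u ∈ A, ∃ v ∈ A, G.Adj u v)
    (h : ∀ x ∈ A, ¬ VertexDecomposableOn G (A.erase x) ∨
        ¬ VertexDecomposableOn G (delClosedNbhd G A x)) :
    ¬ VertexDecomposableOn G A := by
  intro hvd
  rw [VertexDecomposableOn] at hvd
  rcases hvd.2 with hno | ⟨x, hx, h1, h2⟩
  · obtain ⟨u, hu, v, hv, hadj⟩ := hedge
    exact hno u hu v hv hadj
  · rcases h x hx with hh | hh
    · exact hh h1
    · exact hh h2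

end Generic

variable {m : ℕ}

lemma adj_xx {a b : Fin (2*m)} :
    (Pgraph m).Adj (Sum.inl a) (Sum.inl b) ↔ a.val / 2 ≠ b.val / 2 := by
  simp only [Pgraph, SimpleGraph.fromRel_adj, ne_eq, Sum.inl.injEq]
  constructor
  · rintro ⟨h1, h | h⟩
    · exact h
    · omega
  · intro h
    exact ⟨fun he => h (by rw [he]), Or.inl h⟩

lemma adj_yx {b : Fin 2} {a : Fin (2*m)} :
    (Pgraph m).Adj (Sum.inr (Sum.inl b)) (Sum.inl a) ↔ a.val % 2 = b.val := by
  simp [Pgraph, SimpleGraph.fromRel_adj]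

lemma adj_yz {b : Fin 2} {t : Fin 3} :
    (Pgraph m).Adj (Sum.inr (Sum.inl b)) (Sum.inr (Sum.inr t)) ↔ b.val = t.val := by
  simp only [Pgraph, SimpleGraph.fromRel_adj, ne_eq, or_false]
  constructor
  · exact fun h => h.2
  · intro h
    refine ⟨fun he => ?_, h⟩
    simp at he
  
lemma adj_zz {s t : Fin 3} :
    (Pgraph m).Adj (Sum.inr (Sum.inr s)) (Sum.inr (Sum.inr t)) ↔ s ≠ t := by
  simp only [Pgraph, SimpleGraph.fromRel_adj, ne_eq, Sum.inr.injEq, or_self]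
  tauto

lemma not_adj_xz {a : Fin (2*m)} {t : Fin 3} :
    ¬ (Pgraph m).Adj (Sum.inl a) (Sum.inr (Sum.inr t)) := by
  simp [Pgraph, SimpleGraph.fromRel_adj]

lemma not_adj_zx {a : Fin (2*m)} {t : Fin 3} :
    ¬ (Pgraph m).Adj (Sum.inr (Sum.inr t)) (Sum.inl a) := by
  simp [Pgraph, SimpleGraph.fromRel_adj]

lemma not_adj_yy {b c : Fin 2} :
    ¬ (Pgraph m).Adj (Sum.inr (Sum.inl b)) (Sum.inr (Sum.inl c)) := by
  simp [Pgraph, SimpleGraph.fromRel_adj]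

section NWC
variable {m : ℕ}

lemma pair_choice (hm : 2 ≤ m) (j : Fin (2*m)) :
    ∃ i0 : ℕ, i0 + 1 < 2*m ∧ i0 % 2 = 0 ∧ i0 / 2 ≠ j.val / 2 := by
  by_cases h : j.val < 2
  · exact ⟨2, by omega, by omega, by omega⟩
  · exact ⟨0, by omega, by omega, by omega⟩

lemma notWC_del (hm : 2 ≤ m) (A : Finset (Fin (2*m) ⊕ Fin 2 ⊕ Fin 3))
    (j j' : Fin (2*m)) (hne : j ≠ j') (hpair : j.val / 2 = j'.val / 2)
    (hxA : ∀ k, k ≠ j → Sum.inl k ∈ A) (hjA : Sum.inl j ∉ A)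
    (t : Fin 3) (htA : Sum.inr (Sum.inr t) ∈ A)
    (hcov : ∀ w ∈ A, (∃ b, w = Sum.inl b) ∨ w = Sum.inr (Sum.inr t) ∨
        (Pgraph m).Adj w (Sum.inr (Sum.inr t)) ∨ (Pgraph m).Adj w (Sum.inl j')) :
    ¬ WellCoveredOn (Pgraph m) A := by
  obtain ⟨i0, hi1, hi2, hi3⟩ := pair_choice hm j
  have hjv : j.val ≠ j'.val := fun h => hne (Fin.ext h)
  set a0 : Fin (2*m) := ⟨i0, by omega⟩ with ha0
  set b0 : Fin (2*m) := ⟨i0+1, hi1⟩ with hb0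
  have ha0j : a0 ≠ j := by intro h; apply hi3; rw [← h]
  have hb0j : b0 ≠ j := by
    intro h
    have : i0 + 1 = j.val := congrArg Fin.val h
    omega
  set S : Finset (Fin (2*m) ⊕ Fin 2 ⊕ Fin 3) :=
    {Sum.inl j', Sum.inr (Sum.inr t)} with hSdef
  set T : Finset (Fin (2*m) ⊕ Fin 2 ⊕ Fin 3) :=
    {Sum.inl a0, Sum.inl b0, Sum.inr (Sum.inr t)} with hTdef
  have hScard : S.card = 2 := by simp [hSdef]
  have hTcard : T.card = 3 := by
    rw [hTdef]
    rw [Finset.card_insert_of_notMem (by simp [Fin.ext_iff, ha0, hb0] <;> omega),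
      Finset.card_insert_of_notMem (by simp), Finset.card_singleton]
  have hSmax : IsMaxIndepIn (Pgraph m) A S := by
    rw [isMaxIndepIn_iff]
    refine ⟨?_, ?_, ?_⟩
    · rw [hSdef]
      exact Finset.insert_subset (hxA j' hne.symm) (by simpa using htA)
    · intro u hu v hv hadj
      simp only [hSdef, Finset.mem_insert, Finset.mem_singleton] at hu hv
      rcases hu with rfl | rfl <;> rcases hv with rfl | rfl
      · exact (Pgraph m).irrefl hadj
      · exact not_adj_xz hadj
      · exact not_adj_zx hadj
      · exact (Pgraph m).irrefl hadj
    · intro v hvA hvS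
      match v with
      | Sum.inl a =>
        have haj : a ≠ j := fun h => hjA (h ▸ hvA)
        have haj' : a ≠ j' := by
          intro h; apply hvS; simp [hSdef, h]
        refine ⟨Sum.inl j', by simp [hSdef], ?_⟩
        rw [adj_xx]
        have h1 : a.val ≠ j.val := fun h => haj (Fin.ext h)
        have h2 : a.val ≠ j'.val := fun h => haj' (Fin.ext h)
        omega
      | Sum.inr w =>
        rcases hcov _ hvA with ⟨b, hb⟩ | h | h | h
        · exact absurd hb (by simp)
        · exact absurd h (by intro hh; apply hvS; simp [hSdef, hh])
        · exact ⟨Sum.inr (Sum.inr t), by simp [hSdef], h.symm⟩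
        · exact ⟨Sum.inl j', by simp [hSdef], h.symm⟩
  have hTmax : IsMaxIndepIn (Pgraph m) A T := by
    rw [isMaxIndepIn_iff]
    refine ⟨?_, ?_, ?_⟩
    · rw [hTdef]
      refine Finset.insert_subset (hxA a0 ha0j) (Finset.insert_subset (hxA b0 hb0j) ?_)
      simpa using htA
    · intro u hu v hv hadj
      simp only [hTdef, Finset.mem_insert, Finset.mem_singleton] at hu hv
      rcases hu with rfl | rfl | rfl <;> rcases hv with rfl | rfl | rfl
      · exact (Pgraph m).irrefl hadj
      · rw [adj_xx] at hadj; simp only [ha0, hb0] at hadj; omega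
      · exact not_adj_xz hadj
      · rw [adj_xx] at hadj; simp only [ha0, hb0] at hadj; omega
      · exact (Pgraph m).irrefl hadj
      · exact not_adj_xz hadj
      · exact not_adj_zx hadj
      · exact not_adj_zx hadj
      · exact (Pgraph m).irrefl hadj
    · intro v hvA hvT
      match v with
      | Sum.inl a =>
        have ha1 : a.val ≠ i0 := by
          intro h; apply hvT; simp [hTdef, Fin.ext_iff, ha0, hb0]; omega
        have ha2 : a.val ≠ i0 + 1 := by
          intro h; apply hvT; simp [hTdef, Fin.ext_iff, ha0, hb0]; omega
        refine ⟨Sum.inl a0, by simp [hTdef], ?_⟩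
        rw [adj_xx]
        simp only [ha0]
        omega
      | Sum.inr (Sum.inl b) =>
        by_cases hb : b.val = 0
        · refine ⟨Sum.inl a0, by simp [hTdef], ?_⟩
          exact (adj_yx.mpr (by simp [ha0]; omega)).symm
        · have hb1 : b.val = 1 := by omega
          refine ⟨Sum.inl b0, by simp [hTdef], ?_⟩
          exact (adj_yx.mpr (by simp [hb0]; omega)).symm
      | Sum.inr (Sum.inr s) =>
        have hst : s ≠ t := by
          intro h; apply hvT; simp [hTdef, h]
        exact ⟨Sum.inr (Sum.inr t), by simp [hTdef], adj_zz.mpr hst.symm⟩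
  exact notWC_of hSmax hTmax (by omega)

lemma notWC_delX (hm : 2 ≤ m) (A : Finset (Fin (2*m) ⊕ Fin 2 ⊕ Fin 3))
    (j j' : Fin (2*m)) (hne : j ≠ j') (hpair : j.val / 2 = j'.val / 2)
    (hxA : ∀ k, k ≠ j → Sum.inl k ∈ A) (hjA : Sum.inl j ∉ A)
    (hAll : ∀ w ∈ A, ∃ b, w = Sum.inl b) :
    ¬ WellCoveredOn (Pgraph m) A := by
  obtain ⟨i0, hi1, hi2, hi3⟩ := pair_choice hm j
  have hjv : j.val ≠ j'.val := fun h => hne (Fin.ext h)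
  set a0 : Fin (2*m) := ⟨i0, by omega⟩ with ha0
  set b0 : Fin (2*m) := ⟨i0+1, hi1⟩ with hb0
  have ha0j : a0 ≠ j := by intro h; apply hi3; rw [← h]
  have hb0j : b0 ≠ j := by
    intro h
    have : i0 + 1 = j.val := congrArg Fin.val h
    omega
  set S : Finset (Fin (2*m) ⊕ Fin 2 ⊕ Fin 3) := {Sum.inl j'} with hSdef
  set T : Finset (Fin (2*m) ⊕ Fin 2 ⊕ Fin 3) :=
    {Sum.inl a0, Sum.inl b0} with hTdef
  have hScard : S.card = 1 := by simp [hSdef]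
  have hTcard : T.card = 2 := by
    rw [hTdef]
    rw [Finset.card_insert_of_notMem (by simp [Fin.ext_iff, ha0, hb0] <;> omega),
      Finset.card_singleton]
  have hSmax : IsMaxIndepIn (Pgraph m) A S := by
    rw [isMaxIndepIn_iff]
    refine ⟨by simp [hSdef, hxA j' hne.symm], ?_, ?_⟩
    · intro u hu v hv hadj
      simp only [hSdef, Finset.mem_singleton] at hu hv
      rw [hu, hv] at hadj
      exact (Pgraph m).irrefl hadj
    · intro v hvA hvS
      obtain ⟨a, rfl⟩ := hAll _ hvA
      have haj : a ≠ j := fun h => hjA (h ▸ hvA)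
      have haj' : a ≠ j' := by
        intro h; apply hvS; simp [hSdef, h]
      refine ⟨Sum.inl j', by simp [hSdef], ?_⟩
      rw [adj_xx]
      have h1 : a.val ≠ j.val := fun h => haj (Fin.ext h)
      have h2 : a.val ≠ j'.val := fun h => haj' (Fin.ext h)
      omega
  have hTmax : IsMaxIndepIn (Pgraph m) A T := by
    rw [isMaxIndepIn_iff]
    refine ⟨?_, ?_, ?_⟩
    · rw [hTdef]
      exact Finset.insert_subset (hxA a0 ha0j) (by simp [hxA b0 hb0j])
    · intro u hu v hv hadj
      simp only [hTdef, Finset.mem_insert, Finset.mem_singleton] at hu hv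
      rcases hu with rfl | rfl <;> rcases hv with rfl | rfl
      · exact (Pgraph m).irrefl hadj
      · rw [adj_xx] at hadj; simp only [ha0, hb0] at hadj; omega
      · rw [adj_xx] at hadj; simp only [ha0, hb0] at hadj; omega
      · exact (Pgraph m).irrefl hadj
    · intro v hvA hvT
      obtain ⟨a, rfl⟩ := hAll _ hvA
      have ha1 : a.val ≠ i0 := by
        intro h; apply hvT; simp [hTdef, Fin.ext_iff, ha0, hb0]; omega
      have ha2 : a.val ≠ i0 + 1 := by
        intro h; apply hvT; simp [hTdef, Fin.ext_iff, ha0, hb0]; omega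
      refine ⟨Sum.inl a0, by simp [hTdef], ?_⟩
      rw [adj_xx]
      simp only [ha0]
      omega
  exact notWC_of hSmax hTmax (by omega)

end NWC

section Main
variable {m : ℕ}

noncomputable local instance (priority := 2000) : DecidableEq (Fin (2*m) ⊕ Fin 2 ⊕ Fin 3) :=
  fun a b => Classical.propDecidable (a = b)

lemma notVD_main (hm : 2 ≤ m) :
    ∀ A : Finset (Fin (2*m) ⊕ Fin 2 ⊕ Fin 3),
      (∀ k, Sum.inl k ∈ A) → (Sum.inr (Sum.inl 0) ∉ A) →
      (Sum.inr (Sum.inl 1) ∈ A → Sum.inr (Sum.inr 1) ∈ A) →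
      ¬ VertexDecomposableOn (Pgraph m) A := by
  intro A
  induction A using Finset.strongInduction with
  | _ A ih =>
  intro hx hy0 hy1
  apply notVD_step
  · refine ⟨Sum.inl ⟨0, by omega⟩, hx _, Sum.inl ⟨2, by omega⟩, hx _, ?_⟩
    rw [adj_xx]
    simp
  · intro x hxx
    match x with
    | Sum.inl a =>
      left
      apply notVD_of_notWC
      have hav : a.val < 2*m := a.isLt
      set a' : Fin (2*m) := ⟨if a.val % 2 = 0 then a.val + 1 else a.val - 1, by split_ifs <;> omega⟩
        with ha'
      have ha'v : a'.val = if a.val % 2 = 0 then a.val + 1 else a.val - 1 := rfl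
      have hne : a ≠ a' := by
        intro h
        have := congrArg Fin.val h
        rw [ha'v] at this
        split_ifs at this <;> omega
      have hp : a.val / 2 = a'.val / 2 := by
        rw [ha'v]; split_ifs <;> omega
      have hmem : ∀ k, k ≠ a → Sum.inl k ∈ A.erase (Sum.inl a) := fun k hk =>
        Finset.mem_erase.mpr ⟨by simp [hk], hx k⟩
      have hnmem : Sum.inl a ∉ A.erase (Sum.inl a) := Finset.notMem_erase _ _
      by_cases hY : Sum.inr (Sum.inl 1) ∈ A
      · refine notWC_del hm _ a a' hne hp hmem hnmem 1
          (Finset.mem_erase.mpr ⟨by simp, hy1 hY⟩) ?_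
        intro w hw
        match w with
        | Sum.inl b => exact Or.inl ⟨b, rfl⟩
        | Sum.inr (Sum.inl b) =>
          have hb : b = 1 := by
            by_contra hb
            have hb0 : b = 0 := by omega
            exact hy0 (hb0 ▸ Finset.mem_of_mem_erase hw)
          subst hb
          exact Or.inr (Or.inr (Or.inl (adj_yz.mpr rfl)))
        | Sum.inr (Sum.inr s) =>
          by_cases hs : s = 1
          · exact Or.inr (Or.inl (by rw [hs]))
          · exact Or.inr (Or.inr (Or.inl (adj_zz.mpr hs)))
      · by_cases hZ : ∃ s : Fin 3, Sum.inr (Sum.inr s) ∈ A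
        · obtain ⟨s0, hs0⟩ := hZ
          refine notWC_del hm _ a a' hne hp hmem hnmem s0
            (Finset.mem_erase.mpr ⟨by simp, hs0⟩) ?_
          intro w hw
          match w with
          | Sum.inl b => exact Or.inl ⟨b, rfl⟩
          | Sum.inr (Sum.inl b) =>
            exfalso
            have hwA := Finset.mem_of_mem_erase hw
            by_cases hb : b = 0
            · exact hy0 (hb ▸ hwA)
            · have hb1 : b = 1 := by omega
              exact hY (hb1 ▸ hwA)
          | Sum.inr (Sum.inr s) =>
            by_cases hs : s = s0
            · exact Or.inr (Or.inl (by rw [hs]))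
            · exact Or.inr (Or.inr (Or.inl (adj_zz.mpr hs)))
        · refine notWC_delX hm _ a a' hne hp hmem hnmem ?_
          intro w hw
          match w with
          | Sum.inl b => exact ⟨b, rfl⟩
          | Sum.inr (Sum.inl b) =>
            exfalso
            have hwA := Finset.mem_of_mem_erase hw
            by_cases hb : b = 0
            · exact hy0 (hb ▸ hwA)
            · have hb1 : b = 1 := by omega
              exact hY (hb1 ▸ hwA)
          | Sum.inr (Sum.inr s) =>
            exact absurd ⟨s, Finset.mem_of_mem_erase hw⟩ hZ
    | Sum.inr (Sum.inl b) =>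
      by_cases hb : b = 0
      · exact absurd (hb ▸ hxx) hy0
      · have hb1 : b = 1 := by omega
        subst hb1
        left
        refine ih _ (Finset.erase_ssubset hxx) (fun k =>
          Finset.mem_erase.mpr ⟨by simp, hx k⟩)
          (fun h => hy0 (Finset.mem_of_mem_erase h)) ?_
        intro h
        exact absurd h (Finset.notMem_erase _ _)
    | Sum.inr (Sum.inr s) =>
      by_cases hY : Sum.inr (Sum.inl 1) ∈ A
      · by_cases hs : s = 1
        · subst hs
          right
          refine ih _ (Finset.filter_ssubset.mpr ⟨_, hxx, by simp⟩) ?_ ?_ ?_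
          · intro k
            refine Finset.mem_filter.mpr ⟨hx k, by simp, not_adj_zx⟩
          · intro h
            exact hy0 (Finset.mem_of_mem_filter _ h)
          · intro h
            exfalso
            have := (Finset.mem_filter.mp h).2.2
            exact this ((adj_yz.mpr rfl).symm)
        · left
          refine ih _ (Finset.erase_ssubset hxx) (fun k =>
            Finset.mem_erase.mpr ⟨by simp, hx k⟩)
            (fun h => hy0 (Finset.mem_of_mem_erase h)) ?_
          intro h
          refine Finset.mem_erase.mpr ⟨by simp [Ne, hs]; exact fun hh => hs hh.symm, ?_⟩
          exact hy1 hY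
      · left
        refine ih _ (Finset.erase_ssubset hxx) (fun k =>
          Finset.mem_erase.mpr ⟨by simp, hx k⟩)
          (fun h => hy0 (Finset.mem_of_mem_erase h)) ?_
        intro h
        exact absurd (Finset.mem_of_mem_erase h) hY

end Main

section Final
variable {m : ℕ}

noncomputable local instance (priority := 2000) :
    DecidableEq (Fin (2*m) ⊕ Fin 2 ⊕ Fin 3) :=
  fun a b => Classical.propDecidable (a = b)

lemma xNotShed (hm : 2 ≤ m) (a : Fin (2*m)) : Sum.inl a ∉ Shed (Pgraph m) := by
  intro hsh
  apply notVD_of_notWC ?_ hsh.1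
  have hav : a.val < 2*m := a.isLt
  set a' : Fin (2*m) := ⟨if a.val % 2 = 0 then a.val + 1 else a.val - 1,
    by split_ifs <;> omega⟩ with ha'
  have ha'v : a'.val = if a.val % 2 = 0 then a.val + 1 else a.val - 1 := rfl
  have hne : a ≠ a' := by
    intro h
    have := congrArg Fin.val h
    rw [ha'v] at this
    split_ifs at this <;> omega
  have hp : a.val / 2 = a'.val / 2 := by
    rw [ha'v]; split_ifs <;> omega
  set t : Fin 3 := ⟨a.val % 2, by omega⟩ with ht
  refine notWC_del hm _ a a' hne hp
    (fun k hk => Finset.mem_erase.mpr ⟨by simp [hk], Finset.mem_univ _⟩)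
    (Finset.notMem_erase _ _) t
    (Finset.mem_erase.mpr ⟨by simp, Finset.mem_univ _⟩) ?_
  intro w hw
  match w with
  | Sum.inl b => exact Or.inl ⟨b, rfl⟩
  | Sum.inr (Sum.inl b) =>
    by_cases hb : b.val = a.val % 2
    · exact Or.inr (Or.inr (Or.inl (adj_yz.mpr (by rw [ht]; exact hb))))
    · refine Or.inr (Or.inr (Or.inr (adj_yx.mpr ?_)))
      rw [ha'v]
      have := b.isLt
      split_ifs <;> omega
  | Sum.inr (Sum.inr s) =>
    by_cases hs : s = t
    · exact Or.inr (Or.inl (by rw [hs]))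
    · exact Or.inr (Or.inr (Or.inl (adj_zz.mpr hs)))

lemma y0NotShed (hm : 2 ≤ m) : (Sum.inr (Sum.inl 0) : Fin (2*m) ⊕ Fin 2 ⊕ Fin 3) ∉
    Shed (Pgraph m) := by
  intro hsh
  refine notVD_main hm _ ?_ ?_ ?_ hsh.1
  · exact fun k => Finset.mem_erase.mpr ⟨by simp, Finset.mem_univ _⟩
  · exact Finset.notMem_erase _ _
  · exact fun _ => Finset.mem_erase.mpr ⟨by simp, Finset.mem_univ _⟩

end Final

/-- For every `m ≥ 2`, the set of shedding vertices of `P_m` is not a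
dominating set of `P_m`. -/
theorem statement17 (m : ℕ) (hm : 2 ≤ m) :
    ¬ IsDominatingSet (Pgraph m) (Shed (Pgraph m)) := by
  intro hdom
  obtain ⟨u, hu, hadj⟩ := hdom (Sum.inl ⟨0, by omega⟩) (xNotShed hm _)
  rcases u with a | b | s
  · exact xNotShed hm a hu
  · by_cases hb : b = 0
    · exact y0NotShed hm (hb ▸ hu)
    · have hb1 : b = 1 := by omega
      subst hb1
      have := adj_yx.mp hadj
      simp at this
  · exact not_adj_zx hadj
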